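/- Let m₀ : ℝ → ℝ → ℝ be continuous, let ī : ℝ → ℝ be continuous with ī ≥ 0, and set i(t,a) := ī(a) (incidence independent of calendar time). Let m₁ : ℝ → ℝ → ℝ → ℝ be continuous and S₀ : ℝ → ℝ be continuous with S₀ > 0. Define S(t,a) := S₀(t−a)·exp(−∫₀ᵃ (m₀(t−a+τ,τ) + ī(τ)) dτ), M₁(t,a,d) := ∫₀^d m₁(t−d+τ, a−d+τ, τ) dτ, C(t,a,d) := ī(a−d)·S(t−d, a−d)·exp(−M₁(t,a,d)), C⋆(t,a) := ∫₀ᵃ C(t,a,δ) dδ, N(t,a) := S(t,a) + C⋆(t,a), the prevalence p(t,a) := C⋆(t,a)/N(t,a), and M₀(t,a) := ∫₀ᵃ m₀(t−a+τ, τ) dτ. Then for every fixed t ∈ ℝ and every a₀ > 0, the function a ↦ ln S₀(t−a) − ln(1 − p(t,a)) − ln N(t,a) − M₀(t,a) is differentiable at a₀ with derivative ī(a₀). (The incidence can be recovered from the prevalence without knowledge of the duration dependence of m₁.) -/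

import Mathlib

/-- When the incidence `i(t,a) = iBar(a)` is independent of calendar time, the
age-specific incidence can be recovered from the prevalence without knowledge
of the duration dependence of `m₁`: for every fixed `t` and every `a₀ > 0`,
the function `a ↦ ln S₀(t−a) − ln(1 − p(t,a)) − ln N(t,a) − M₀(t,a)` is
differentiable at `a₀` with derivative `iBar(a₀)`. -/
theorem keiding_incidence_from_prevalence_time_independent
    (m₀ : ℝ → ℝ → ℝ)
    (hm₀ : Continuous fun q : ℝ × ℝ => m₀ q.1 q.2)
    (iBar : ℝ → ℝ) (hiBar : Continuous iBar) (hiBar_nonneg : ∀ a : ℝ, 0 ≤ iBar a)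
    (i : ℝ → ℝ → ℝ) (hi : ∀ t a : ℝ, i t a = iBar a)
    (m₁ : ℝ → ℝ → ℝ → ℝ)
    (hm₁ : Continuous fun q : ℝ × ℝ × ℝ => m₁ q.1 q.2.1 q.2.2)
    (S₀ : ℝ → ℝ) (hS₀ : Continuous S₀) (hS₀_pos : ∀ u : ℝ, 0 < S₀ u)
    (S : ℝ → ℝ → ℝ)
    (hS : ∀ t a : ℝ, S t a = S₀ (t - a) *
      Real.exp (-∫ τ in (0:ℝ)..a, (m₀ (t - a + τ) τ + iBar τ)))
    (M₁ : ℝ → ℝ → ℝ → ℝ)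
    (hM₁ : ∀ t a d : ℝ, M₁ t a d =
      ∫ τ in (0:ℝ)..d, m₁ (t - d + τ) (a - d + τ) τ)
    (C : ℝ → ℝ → ℝ → ℝ)
    (hC : ∀ t a d : ℝ, C t a d =
      iBar (a - d) * S (t - d) (a - d) * Real.exp (-M₁ t a d))
    (Cstar : ℝ → ℝ → ℝ)
    (hCstar : ∀ t a : ℝ, Cstar t a = ∫ δ in (0:ℝ)..a, C t a δ)
    (N : ℝ → ℝ → ℝ)
    (hN : ∀ t a : ℝ, N t a = S t a + Cstar t a)
    (p : ℝ → ℝ → ℝ)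
    (hp : ∀ t a : ℝ, p t a = Cstar t a / N t a)
    (M₀ : ℝ → ℝ → ℝ)
    (hM₀ : ∀ t a : ℝ, M₀ t a = ∫ τ in (0:ℝ)..a, m₀ (t - a + τ) τ) :
    ∀ t a₀ : ℝ, 0 < a₀ →
      HasDerivAt (fun a : ℝ => Real.log (S₀ (t - a)) - Real.log (1 - p t a)
        - Real.log (N t a) - M₀ t a) (iBar a₀) a₀ := by
  intro t a₀ ha₀
  -- The target function coincides near a₀ with a ↦ ∫ τ in 0..a, iBar τ.
  have hS_pos : ∀ t' a : ℝ, 0 < S t' a := by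
    intro t' a
    rw [hS]
    exact mul_pos (hS₀_pos _) (Real.exp_pos _)
  have key : ∀ a : ℝ, 0 < a →
      Real.log (S₀ (t - a)) - Real.log (1 - p t a)
        - Real.log (N t a) - M₀ t a = ∫ τ in (0:ℝ)..a, iBar τ := by
    intro a ha
    have hCst_nonneg : 0 ≤ Cstar t a := by
      rw [hCstar]
      apply intervalIntegral.integral_nonneg ha.le
      intro d _
      rw [hC]
      exact mul_nonneg (mul_nonneg (hiBar_nonneg _) (hS_pos (t - d) (a - d)).le)
        (Real.exp_pos _).le
    have hN_pos : 0 < N t a := by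
      rw [hN]; have := hS_pos t a; linarith
    have h1p : 1 - p t a = S t a / N t a := by
      have hNne : S t a + Cstar t a ≠ 0 := by rw [hN] at hN_pos; exact hN_pos.ne'
      rw [hp, hN]
      field_simp
      ring
    rw [h1p, Real.log_div (hS_pos t a).ne' hN_pos.ne']
    have hint1 : IntervalIntegrable (fun τ => m₀ (t - a + τ) τ) MeasureTheory.volume 0 a := by
      have : Continuous fun τ : ℝ => m₀ (t - a + τ) τ :=
        hm₀.comp ((continuous_const.add continuous_id).prodMk continuous_id)
      exact this.intervalIntegrable 0 a
    have hint2 : IntervalIntegrable iBar MeasureTheory.volume 0 a :=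
      hiBar.intervalIntegrable 0 a
    have hsplit : (∫ τ in (0:ℝ)..a, (m₀ (t - a + τ) τ + iBar τ))
        = M₀ t a + ∫ τ in (0:ℝ)..a, iBar τ := by
      rw [hM₀, intervalIntegral.integral_add hint1 hint2]
    rw [hS, Real.log_mul (hS₀_pos (t - a)).ne' (Real.exp_pos _).ne', Real.log_exp, hsplit]
    ring
  have heq : (fun a : ℝ => Real.log (S₀ (t - a)) - Real.log (1 - p t a)
      - Real.log (N t a) - M₀ t a) =ᶠ[nhds a₀] fun a => ∫ τ in (0:ℝ)..a, iBar τ := by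
    filter_upwards [eventually_gt_nhds ha₀] with a ha using key a ha
  have hderiv : HasDerivAt (fun a => ∫ τ in (0:ℝ)..a, iBar τ) (iBar a₀) a₀ :=
    intervalIntegral.integral_hasDerivAt_right (hiBar.intervalIntegrable 0 a₀)
      (hiBar.stronglyMeasurableAtFilter _ _) hiBar.continuousAt
  exact hderiv.congr_of_eventuallyEq heq
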